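/- A real symmetric tensor of order 3 and size n admits an orthogonal Waring decomposition if and only if its n slices pairwise commute. -/

import Mathlib

open Matrix

section Helpers

variable {n : ℕ}

private lemma pull_out3 (G : Fin n → Fin n → Fin n → ℝ) :
    ∑ p, ∑ q, ∑ r, G p q r = ∑ r, ∑ p, ∑ q, G p q r :=
  calc ∑ p, ∑ q, ∑ r, G p q r
      = ∑ p, ∑ r, ∑ q, G p q r :=
        Finset.sum_congr rfl fun _ _ => Finset.sum_comm
    _ = ∑ r, ∑ p, ∑ q, G p q r := Finset.sum_comm

private lemma pull_out4 (G : Fin n → Fin n → Fin n → Fin n → ℝ) :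
    ∑ p, ∑ q, ∑ k, ∑ a, G p q k a = ∑ a, ∑ p, ∑ q, ∑ k, G p q k a :=
  calc ∑ p, ∑ q, ∑ k, ∑ a, G p q k a
      = ∑ p, ∑ q, ∑ a, ∑ k, G p q k a :=
        Finset.sum_congr rfl fun _ _ => Finset.sum_congr rfl fun _ _ => Finset.sum_comm
    _ = ∑ p, ∑ a, ∑ q, ∑ k, G p q k a :=
        Finset.sum_congr rfl fun _ _ => Finset.sum_comm
    _ = ∑ a, ∑ p, ∑ q, ∑ k, G p q k a := Finset.sum_comm

private lemma swap36 (F : Fin n → Fin n → Fin n → Fin n → Fin n → Fin n → ℝ) :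
    ∑ p, ∑ q, ∑ k, ∑ a, ∑ b, ∑ c, F p q k a b c
      = ∑ a, ∑ b, ∑ c, ∑ p, ∑ q, ∑ k, F p q k a b c := by
  refine (pull_out4 fun p q k a => ∑ b, ∑ c, F p q k a b c).trans ?_
  refine Finset.sum_congr rfl fun a _ => ?_
  refine (pull_out4 fun p q k b => ∑ c, F p q k a b c).trans ?_
  refine Finset.sum_congr rfl fun b _ => ?_
  exact pull_out4 fun p q k c => F p q k a b c

private lemma sum1_mul (W : Fin n → ℝ) (u v w : ℝ) :
    (∑ m, W m) * u * v * w = ∑ m, W m * u * v * w := by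
  rw [Finset.sum_mul, Finset.sum_mul, Finset.sum_mul]

private lemma sum3_mul (W : Fin n → Fin n → Fin n → ℝ) (u v w : ℝ) :
    (∑ p, ∑ q, ∑ k, W p q k) * u * v * w = ∑ p, ∑ q, ∑ k, W p q k * u * v * w := by
  rw [Finset.sum_mul, Finset.sum_mul, Finset.sum_mul]
  refine Finset.sum_congr rfl fun p _ => ?_
  rw [Finset.sum_mul, Finset.sum_mul, Finset.sum_mul]
  refine Finset.sum_congr rfl fun q _ => ?_
  rw [Finset.sum_mul, Finset.sum_mul, Finset.sum_mul]

private lemma quad_mul (X : ℝ) (f g h : Fin n → ℝ) :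
    X * (∑ a, f a) * (∑ b, g b) * (∑ c, h c) = ∑ a, ∑ b, ∑ c, X * f a * g b * h c := by
  rw [Finset.mul_sum Finset.univ f X, Finset.sum_mul, Finset.sum_mul]
  refine Finset.sum_congr rfl fun a _ => ?_
  rw [Finset.mul_sum Finset.univ g (X * f a), Finset.sum_mul]
  refine Finset.sum_congr rfl fun b _ => ?_
  rw [Finset.mul_sum]

private lemma cubic_subst (T : Fin n → Fin n → Fin n → ℝ) (R : Fin n → Fin n → ℝ)
    (y : Fin n → ℝ) :
    ∑ p, ∑ q, ∑ k, T p q k * (∑ a, R p a * y a) * (∑ b, R q b * y b) * (∑ c, R k c * y c)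
    = ∑ a, ∑ b, ∑ c,
        (∑ p, ∑ q, ∑ k, T p q k * R p a * R q b * R k c) * y a * y b * y c := by
  calc ∑ p, ∑ q, ∑ k, T p q k * (∑ a, R p a * y a) * (∑ b, R q b * y b) * (∑ c, R k c * y c)
      = ∑ p, ∑ q, ∑ k, ∑ a, ∑ b, ∑ c,
          T p q k * (R p a * y a) * (R q b * y b) * (R k c * y c) := by
        refine Finset.sum_congr rfl fun p _ => Finset.sum_congr rfl fun q _ =>
          Finset.sum_congr rfl fun k _ => ?_
        exact quad_mul (T p q k) _ _ _
    _ = ∑ a, ∑ b, ∑ c, ∑ p, ∑ q, ∑ k,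
          T p q k * (R p a * y a) * (R q b * y b) * (R k c * y c) := swap36 _
    _ = ∑ a, ∑ b, ∑ c,
        (∑ p, ∑ q, ∑ k, T p q k * R p a * R q b * R k c) * y a * y b * y c := by
        refine Finset.sum_congr rfl fun a _ => Finset.sum_congr rfl fun b _ =>
          Finset.sum_congr rfl fun c _ => ?_
        rw [sum3_mul]
        refine Finset.sum_congr rfl fun p _ => Finset.sum_congr rfl fun q _ =>
          Finset.sum_congr rfl fun k _ => ?_
        ring

private lemma waring_expand (α : Fin n → ℝ) (A : Matrix (Fin n) (Fin n) ℝ) (x : Fin n → ℝ) :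
    ∑ m, α m * (A.mulVec x m) ^ 3
    = ∑ a, ∑ b, ∑ c, (∑ m, α m * A m a * A m b * A m c) * x a * x b * x c := by
  calc ∑ m, α m * (A.mulVec x m) ^ 3
      = ∑ m, ∑ a, ∑ b, ∑ c, α m * (A m a * x a) * (A m b * x b) * (A m c * x c) := by
        refine Finset.sum_congr rfl fun m _ => ?_
        have h : A.mulVec x m = ∑ a, A m a * x a := rfl
        rw [h, pow_three, ← mul_assoc, ← mul_assoc]
        exact quad_mul (α m) _ _ _
    _ = ∑ a, ∑ b, ∑ c, ∑ m, α m * (A m a * x a) * (A m b * x b) * (A m c * x c) :=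
        (pull_out4 fun a b c m => α m * (A m a * x a) * (A m b * x b) * (A m c * x c)).symm
    _ = ∑ a, ∑ b, ∑ c, (∑ m, α m * A m a * A m b * A m c) * x a * x b * x c := by
        refine Finset.sum_congr rfl fun a _ => Finset.sum_congr rfl fun b _ =>
          Finset.sum_congr rfl fun c _ => ?_
        rw [sum1_mul]
        exact Finset.sum_congr rfl fun m _ => by ring

private lemma cubic_eval (U : Fin n → Fin n → Fin n → ℝ) (i j k : Fin n) :
    (∑ a, ∑ b, ∑ c, U a b c
        * ((if a = i then (1:ℝ) else 0) + (if a = j then 1 else 0) + (if a = k then 1 else 0))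
        * ((if b = i then (1:ℝ) else 0) + (if b = j then 1 else 0) + (if b = k then 1 else 0))
        * ((if c = i then (1:ℝ) else 0) + (if c = j then 1 else 0) + (if c = k then 1 else 0)))
      = ((U i i i + U j i i + U k i i) + (U i j i + U j j i + U k j i)
          + (U i k i + U j k i + U k k i))
      + ((U i i j + U j i j + U k i j) + (U i j j + U j j j + U k j j)
          + (U i k j + U j k j + U k k j))
      + ((U i i k + U j i k + U k i k) + (U i j k + U j j k + U k j k)
          + (U i k k + U j k k + U k k k)) := by
  set v : Fin n → ℝ := fun a =>
    (if a = i then (1:ℝ) else 0) + (if a = j then 1 else 0) + (if a = k then 1 else 0) with hvdef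
  have hv : ∀ (c : Fin n → ℝ), (∑ a, c a * v a) = c i + c j + c k := by
    intro c
    simp [hvdef, mul_add, Finset.sum_add_distrib, mul_ite, mul_one, mul_zero]
  calc
    ∑ a, ∑ b, ∑ c, U a b c * v a * v b * v c
        = ∑ a, ∑ b, (U a b i * v a * v b + U a b j * v a * v b + U a b k * v a * v b) := by
          refine Finset.sum_congr rfl fun a _ => Finset.sum_congr rfl fun b _ => ?_
          exact hv (fun r => U a b r * v a * v b)
    _ = ∑ a, ((U a i i * v a + U a j i * v a + U a k i * v a)
            + (U a i j * v a + U a j j * v a + U a k j * v a)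
            + (U a i k * v a + U a j k * v a + U a k k * v a)) := by
          refine Finset.sum_congr rfl fun a _ => ?_
          rw [Finset.sum_add_distrib, Finset.sum_add_distrib,
            hv (fun b => U a b i * v a), hv (fun b => U a b j * v a), hv (fun b => U a b k * v a)]
    _ = _ := by
          rw [Finset.sum_add_distrib, Finset.sum_add_distrib]
          simp only [Finset.sum_add_distrib]
          rw [hv (fun a => U a i i), hv (fun a => U a j i), hv (fun a => U a k i),
            hv (fun a => U a i j), hv (fun a => U a j j), hv (fun a => U a k j),
            hv (fun a => U a i k), hv (fun a => U a j k), hv (fun a => U a k k)]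

private lemma tensor_eq_zero (U : Fin n → Fin n → Fin n → ℝ)
    (hs1 : ∀ i j k, U i j k = U j i k) (hs2 : ∀ i j k, U i j k = U i k j)
    (hz : ∀ x : Fin n → ℝ, ∑ a, ∑ b, ∑ c, U a b c * x a * x b * x c = 0) :
    ∀ i j k, U i j k = 0 := by
  intro i j k
  have E : ∀ p q r : Fin n,
      ((U p p p + U q p p + U r p p) + (U p q p + U q q p + U r q p)
          + (U p r p + U q r p + U r r p))
      + ((U p p q + U q p q + U r p q) + (U p q q + U q q q + U r q q)
          + (U p r q + U q r q + U r r q))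
      + ((U p p r + U q p r + U r p r) + (U p q r + U q q r + U r q r)
          + (U p r r + U q r r + U r r r)) = 0 := by
    intro p q r
    have h := hz (fun a =>
      (if a = p then (1:ℝ) else 0) + (if a = q then 1 else 0) + (if a = r then 1 else 0))
    rw [cubic_eval U p q r] at h
    exact h
  linarith [E i j k, E i i j, E i j j, E i i k, E i k k, E j j k, E j k k, E i i i, E j j j,
    E k k k, hs1 i i i, hs2 i i i, hs1 i i j, hs2 i i j, hs1 i i k, hs2 i i k, hs1 i j i,
    hs2 i j i, hs1 i j j, hs2 i j j, hs1 i j k, hs2 i j k, hs1 i k i, hs2 i k i, hs1 i k j,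
    hs2 i k j, hs1 i k k, hs2 i k k, hs1 j i i, hs2 j i i, hs1 j i j, hs2 j i j, hs1 j i k,
    hs2 j i k, hs1 j j i, hs2 j j i, hs1 j j j, hs2 j j j, hs1 j j k, hs2 j j k, hs1 j k i,
    hs2 j k i, hs1 j k j, hs2 j k j, hs1 j k k, hs2 j k k, hs1 k i i, hs2 k i i, hs1 k i j,
    hs2 k i j, hs1 k i k, hs2 k i k, hs1 k j i, hs2 k j i, hs1 k j j, hs2 k j j, hs1 k j k,
    hs2 k j k, hs1 k k i, hs2 k k i, hs1 k k j, hs2 k k j, hs1 k k k, hs2 k k k]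

private lemma simul_diag (M : Fin n → Matrix (Fin n) (Fin n) ℝ)
    (hsym : ∀ k, (M k).IsHermitian)
    (hcomm : ∀ k l, M k * M l = M l * M k) :
    ∃ (Q : Matrix (Fin n) (Fin n) ℝ) (μ : Fin n → Fin n → ℝ),
      Q * Qᵀ = 1 ∧ ∀ k a, (M k) *ᵥ (fun j => Q a j) = fun j => μ k a * Q a j := by
  classical
  set E := EuclideanSpace ℝ (Fin n) with hE
  let L : Fin n → E →ₗ[ℝ] E := fun k => Matrix.toEuclideanLin (M k)
  have hL : ∀ k, (L k).IsSymmetric := fun k => Matrix.isHermitian_iff_isSymmetric.1 (hsym k)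
  have hLcomm : Pairwise (Function.onFun Commute L) := by
    intro k l _
    show L k * L l = L l * L k
    refine LinearMap.ext fun x => ?_
    show Matrix.toEuclideanLin (M k) (Matrix.toEuclideanLin (M l) x)
        = Matrix.toEuclideanLin (M l) (Matrix.toEuclideanLin (M k) x)
    simp only [Matrix.toEuclideanLin_apply]
    simp [Matrix.mulVec_mulVec, hcomm k l]
  set V : (Fin n → ℝ) → Submodule ℝ E := fun χ => ⨅ j, Module.End.eigenspace (L j) (χ j) with hV
  have hInt : DirectSum.IsInternal V :=
    LinearMap.IsSymmetric.LinearMap.IsSymmetric.directSum_isInternal_of_pairwise_commute hL hLcomm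
  haveI : Fintype {χ // V χ ≠ ⊥} := hInt.submodule_iSupIndep.fintypeNeBotOfFiniteDimensional
  have hInt' : DirectSum.IsInternal (fun χ : {χ // V χ ≠ ⊥} => V χ) :=
    DirectSum.isInternal_ne_bot_iff.mpr hInt
  have hOrth : OrthogonalFamily ℝ (fun χ : {χ // V χ ≠ ⊥} => V χ)
      (fun χ => (V χ.1).subtypeₗᵢ) := by
    intro i j hij
    exact LinearMap.IsSymmetric.orthogonalFamily_iInf_eigenspaces hL (Subtype.val_injective.ne hij)
  have hn : Module.finrank ℝ E = n := finrank_euclideanSpace_fin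
  let b := hInt'.subordinateOrthonormalBasis hn hOrth
  let χa : Fin n → (Fin n → ℝ) := fun a => (hInt'.subordinateOrthonormalBasisIndex hn a hOrth).1
  have hmem : ∀ a, b a ∈ V (χa a) := fun a =>
    hInt'.subordinateOrthonormalBasis_subordinate hn a hOrth
  have heig : ∀ k a, L k (b a) = χa a k • b a := by
    intro k a
    have := (Submodule.mem_iInf _).mp (hmem a) k
    exact (Module.End.mem_eigenspace_iff).mp this
  refine ⟨Matrix.of (fun a p => b a p), fun k a => χa a k, ?_, ?_⟩
  · ext a c
    have h := orthonormal_iff_ite.mp b.orthonormal a c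
    simp only [Matrix.mul_apply, Matrix.one_apply, Matrix.transpose_apply, Matrix.of_apply]
    rw [← h, PiLp.inner_apply]
    simp [RCLike.inner_apply, mul_comm]
  · intro k a
    have h := heig k a
    have h2 : ∀ p, (M k *ᵥ fun j => b a j) p = (χa a k • b a) p := by
      intro p
      rw [← h]
      rfl
    funext p
    exact h2 p

end Helpers

/-- A real symmetric tensor of order 3 admits an orthogonal Waring decomposition iff
its slices pairwise commute. -/
theorem real_orthogonal_waring_iff_slices_commute {n : ℕ}
    (T : Fin n → Fin n → Fin n → ℝ)
    (hsym : ∀ i j k, T i j k = T j i k ∧ T i j k = T i k j) :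
    (∃ A : Matrix (Fin n) (Fin n) ℝ, Aᵀ * A = 1 ∧
      ∃ α : Fin n → ℝ, ∀ x : Fin n → ℝ,
        ∑ i, ∑ j, ∑ k, T i j k * x i * x j * x k
          = ∑ i, α i * (A.mulVec x i) ^ 3) ↔
    (∀ k l : Fin n,
      (Matrix.of (fun i j => T i j k)) * (Matrix.of (fun i j => T i j l))
        = (Matrix.of (fun i j => T i j l)) * (Matrix.of (fun i j => T i j k))) := by
  constructor
  · rintro ⟨A, hA, α, hx⟩ k l
    have hAAt : A * Aᵀ = 1 := mul_eq_one_comm.mp hA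
    have hrows : ∀ m m', ∑ p, A m p * A m' p = if m = m' then (1:ℝ) else 0 := by
      intro m m'
      have h : (A * Aᵀ) m m' = (1 : Matrix (Fin n) (Fin n) ℝ) m m' := by rw [hAAt]
      simpa [Matrix.mul_apply, Matrix.one_apply, Matrix.transpose_apply] using h
    set S : Fin n → Fin n → Fin n → ℝ := fun a b c => ∑ m, α m * A m a * A m b * A m c
      with hSdef
    have hTS : ∀ a b c, T a b c = S a b c := by
      have hz : ∀ x : Fin n → ℝ,
          ∑ a, ∑ b, ∑ c, (T a b c - S a b c) * x a * x b * x c = 0 := by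
        intro x
        have h1 := hx x
        rw [waring_expand α A x] at h1
        have expand : ∑ a, ∑ b, ∑ c, (T a b c - S a b c) * x a * x b * x c
            = (∑ a, ∑ b, ∑ c, T a b c * x a * x b * x c)
              - ∑ a, ∑ b, ∑ c, S a b c * x a * x b * x c := by
          rw [← Finset.sum_sub_distrib]
          refine Finset.sum_congr rfl fun a _ => ?_
          rw [← Finset.sum_sub_distrib]
          refine Finset.sum_congr rfl fun b _ => ?_
          rw [← Finset.sum_sub_distrib]
          refine Finset.sum_congr rfl fun c _ => ?_
          ring
        rw [expand, h1]
        simp only [hSdef]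
        exact sub_self _
      have hs1 : ∀ i j k', T i j k' - S i j k' = T j i k' - S j i k' := by
        intro i j k'
        have hT' := (hsym i j k').1
        have hS' : S i j k' = S j i k' := by
          simp only [hSdef]
          exact Finset.sum_congr rfl fun m _ => by ring
        rw [hT', hS']
      have hs2 : ∀ i j k', T i j k' - S i j k' = T i k' j - S i k' j := by
        intro i j k'
        have hT' := (hsym i j k').2
        have hS' : S i j k' = S i k' j := by
          simp only [hSdef]
          exact Finset.sum_congr rfl fun m _ => by ring
        rw [hT', hS']
      intro a b c
      have h := tensor_eq_zero (fun a b c => T a b c - S a b c) hs1 hs2 hz a b c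
      exact sub_eq_zero.mp h
    have key : ∀ i j k' l', ∑ p, S i p k' * S p j l'
        = ∑ m, α m * α m * A m i * A m j * A m k' * A m l' := by
      intro i j k' l'
      calc ∑ p, S i p k' * S p j l'
          = ∑ p, ∑ m, ∑ m',
              (α m * A m i * A m p * A m k') * (α m' * A m' p * A m' j * A m' l') := by
            refine Finset.sum_congr rfl fun p _ => ?_
            simp only [hSdef]
            exact Finset.sum_mul_sum _ _ _ _
        _ = ∑ m, ∑ m', ∑ p,
              (α m * A m i * A m p * A m k') * (α m' * A m' p * A m' j * A m' l') :=
            (pull_out3 _).trans (pull_out3 _)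
        _ = ∑ m, ∑ m',
              (α m * A m i * A m k' * (α m' * A m' j * A m' l')) * ∑ p, A m p * A m' p := by
            refine Finset.sum_congr rfl fun m _ => Finset.sum_congr rfl fun m' _ => ?_
            rw [Finset.mul_sum]
            exact Finset.sum_congr rfl fun p _ => by ring
        _ = ∑ m, α m * α m * A m i * A m j * A m k' * A m l' := by
            refine Finset.sum_congr rfl fun m _ => ?_
            calc ∑ m', (α m * A m i * A m k' * (α m' * A m' j * A m' l'))
                    * ∑ p, A m p * A m' p
                = ∑ m', if m = m'
                    then α m * α m * A m i * A m j * A m k' * A m l' else 0 := by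
                  refine Finset.sum_congr rfl fun m' _ => ?_
                  rw [hrows m m']
                  split_ifs with h
                  · subst h; ring
                  · ring
              _ = α m * α m * A m i * A m j * A m k' * A m l' := by
                  simp
    ext i j
    simp only [Matrix.mul_apply, Matrix.of_apply]
    calc ∑ p, T i p k * T p j l
        = ∑ p, S i p k * S p j l := Finset.sum_congr rfl fun p _ => by rw [hTS, hTS]
      _ = ∑ m, α m * α m * A m i * A m j * A m k * A m l := key i j k l
      _ = ∑ m, α m * α m * A m i * A m j * A m l * A m k :=
          Finset.sum_congr rfl fun m _ => by ring
      _ = ∑ p, S i p l * S p j k := (key i j l k).symm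
      _ = ∑ p, T i p l * T p j k := Finset.sum_congr rfl fun p _ => by rw [hTS, hTS]
  · intro hcomm
    set M : Fin n → Matrix (Fin n) (Fin n) ℝ := fun k => Matrix.of (fun i j => T i j k)
      with hM
    have hMsym : ∀ k, (M k).IsHermitian := by
      intro k
      ext i j
      simp only [hM, Matrix.conjTranspose_apply, Matrix.of_apply, star_trivial]
      exact (hsym j i k).1
    have hMcomm : ∀ k l, M k * M l = M l * M k := fun k l => hcomm k l
    obtain ⟨Q, μ, hQQt, heig⟩ := simul_diag M hMsym hMcomm
    have hQtQ : Qᵀ * Q = 1 := mul_eq_one_comm.mp hQQt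
    have hrowsQ : ∀ a b, ∑ p, Q a p * Q b p = if a = b then (1:ℝ) else 0 := by
      intro a b
      have h : (Q * Qᵀ) a b = (1 : Matrix (Fin n) (Fin n) ℝ) a b := by rw [hQQt]
      simpa [Matrix.mul_apply, Matrix.one_apply, Matrix.transpose_apply] using h
    have hrow : ∀ k a p, ∑ q, T p q k * Q a q = μ k a * Q a p := by
      intro k a p
      have h := congrFun (heig k a) p
      simpa [Matrix.mulVec, dotProduct, hM] using h
    have hD : ∀ k a b, ∑ p, ∑ q, Q a p * Q b q * T p q k = if a = b then μ k b else 0 := by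
      intro k a b
      calc ∑ p, ∑ q, Q a p * Q b q * T p q k
          = ∑ p, Q a p * (μ k b * Q b p) := by
            refine Finset.sum_congr rfl fun p _ => ?_
            rw [← hrow k b p, Finset.mul_sum]
            exact Finset.sum_congr rfl fun q _ => by ring
        _ = μ k b * ∑ p, Q a p * Q b p := by
            rw [Finset.mul_sum]
            exact Finset.sum_congr rfl fun p _ => by ring
        _ = if a = b then μ k b else 0 := by
            rw [hrowsQ a b]
            split_ifs <;> ring
    set Tq : Fin n → Fin n → Fin n → ℝ :=
      fun a b c => ∑ p, ∑ q, ∑ r, T p q r * Q a p * Q b q * Q c r with hTq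
    have hTq_diag : ∀ a b c, a ≠ b → Tq a b c = 0 := by
      intro a b c hab
      calc Tq a b c = ∑ r, ∑ p, ∑ q, T p q r * Q a p * Q b q * Q c r := by
            simp only [hTq]
            exact pull_out3 _
        _ = ∑ r, (∑ p, ∑ q, Q a p * Q b q * T p q r) * Q c r := by
            refine Finset.sum_congr rfl fun r _ => ?_
            rw [Finset.sum_mul]
            refine Finset.sum_congr rfl fun p _ => ?_
            rw [Finset.sum_mul]
            exact Finset.sum_congr rfl fun q _ => by ring
        _ = 0 := by
            refine Finset.sum_eq_zero fun r _ => ?_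
            rw [hD r a b, if_neg hab, zero_mul]
    have hTq_s1 : ∀ a b c, Tq a b c = Tq b a c := by
      intro a b c
      simp only [hTq]
      calc ∑ p, ∑ q, ∑ r, T p q r * Q a p * Q b q * Q c r
          = ∑ q, ∑ p, ∑ r, T p q r * Q a p * Q b q * Q c r := Finset.sum_comm
        _ = ∑ p, ∑ q, ∑ r, T q p r * Q a q * Q b p * Q c r := rfl
        _ = ∑ p, ∑ q, ∑ r, T p q r * Q b p * Q a q * Q c r := by
            refine Finset.sum_congr rfl fun p _ => Finset.sum_congr rfl fun q _ =>
              Finset.sum_congr rfl fun r _ => ?_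
            rw [(hsym q p r).1]
            ring
    have hTq_s2 : ∀ a b c, Tq a b c = Tq a c b := by
      intro a b c
      simp only [hTq]
      refine Finset.sum_congr rfl fun p _ => ?_
      calc ∑ q, ∑ r, T p q r * Q a p * Q b q * Q c r
          = ∑ r, ∑ q, T p q r * Q a p * Q b q * Q c r := Finset.sum_comm
        _ = ∑ q, ∑ r, T p r q * Q a p * Q b r * Q c q := rfl
        _ = ∑ q, ∑ r, T p q r * Q a p * Q c q * Q b r := by
            refine Finset.sum_congr rfl fun q _ => Finset.sum_congr rfl fun r _ => ?_
            rw [← (hsym p q r).2]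
            ring
    have hTq_diag' : ∀ a c, a ≠ c → Tq a a c = 0 := by
      intro a c hac
      rw [hTq_s2 a a c, hTq_s1 a c a]
      exact hTq_diag c a a (Ne.symm hac)
    refine ⟨Q, hQtQ, fun a => Tq a a a, fun x => ?_⟩
    have hx : ∀ p, x p = ∑ a, Q a p * Q.mulVec x a := by
      intro p
      have h : Qᵀ.mulVec (Q.mulVec x) p = x p := by
        rw [Matrix.mulVec_mulVec, hQtQ, Matrix.one_mulVec]
      rw [← h]
      simp [Matrix.mulVec, dotProduct, Matrix.transpose_apply]
    calc ∑ i, ∑ j, ∑ k, T i j k * x i * x j * x k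
        = ∑ p, ∑ q, ∑ k, T p q k * (∑ a, Q a p * Q.mulVec x a) * (∑ b, Q b q * Q.mulVec x b)
            * (∑ c, Q c k * Q.mulVec x c) := by
          refine Finset.sum_congr rfl fun p _ => Finset.sum_congr rfl fun q _ =>
            Finset.sum_congr rfl fun k' _ => ?_
          rw [← hx p, ← hx q, ← hx k']
      _ = ∑ a, ∑ b, ∑ c, Tq a b c * Q.mulVec x a * Q.mulVec x b * Q.mulVec x c :=
          cubic_subst T (fun p a => Q a p) (Q.mulVec x)
      _ = ∑ a, Tq a a a * Q.mulVec x a ^ 3 := by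
          refine Finset.sum_congr rfl fun a _ => ?_
          rw [Finset.sum_eq_single a
            (fun b _ hb => Finset.sum_eq_zero fun c _ => by
              rw [hTq_diag a b c (Ne.symm hb), zero_mul, zero_mul, zero_mul])
            (fun h => absurd (Finset.mem_univ a) h)]
          rw [Finset.sum_eq_single a
            (fun c _ hc => by
              rw [hTq_diag' a c (Ne.symm hc), zero_mul, zero_mul, zero_mul])
            (fun h => absurd (Finset.mem_univ a) h)]
          ring
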